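/- Let k ≥ 1 and n ≥ 1 be integers and set a = 2k. Then |D_{a, an+2}| − |D_{a, an+1}| = Σ_{j=1}^{k} |D_{a−j, (a−j)n+1}| · |D_{j, jn+1}|, where |D_{1,m}| = 1 by convention. -/

import Mathlib

/-- The number of `(a,b)`-Dyck paths: lattice paths from `(0,a)` to `(b,0)` with unit
south and east steps staying weakly below the segment joining these points, encoded as
weakly increasing sequences `c_1 ≤ … ≤ c_{a-1}` of naturals with `c_l ≤ ⌊b*l/a⌋`. -/
noncomputable def dyckCount (a b : ℕ) : ℕ :=
  Nat.card {c : Fin (a - 1) → ℕ //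
    Monotone c ∧ ∀ l : Fin (a - 1), c l ≤ b * (l.1 + 1) / a}

namespace DyckAux

/-- Monotone sequences of length `m` with `c l ≤ f l`. -/
def Mset (m : ℕ) (f : ℕ → ℕ) : Set (Fin m → ℕ) :=
  {c | Monotone c ∧ ∀ l : Fin m, c l ≤ f l.1}

lemma mem_Mset {m : ℕ} {f : ℕ → ℕ} {c : Fin m → ℕ} :
    c ∈ Mset m f ↔ Monotone c ∧ ∀ l : Fin m, c l ≤ f l.1 := Iff.rfl

lemma Mset_finite (m : ℕ) (f : ℕ → ℕ) : (Mset m f).Finite := by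
  apply Set.Finite.subset (Set.Finite.pi' (t := fun i : Fin m => Set.Iic (f i.1))
    (fun i => Set.finite_Iic _))
  intro c hc i
  exact hc.2 i

lemma dyck_eq (a b : ℕ) :
    dyckCount a b = (Mset (a - 1) (fun i => b * (i + 1) / a)).ncard := by
  rw [← Nat.card_coe_set_eq]
  rfl

lemma Mset_congr {m : ℕ} {f g : ℕ → ℕ} (h : ∀ i < m, f i = g i) :
    Mset m f = Mset m g := by
  ext c
  constructor <;> rintro ⟨h1, h2⟩ <;> refine ⟨h1, fun l => ?_⟩
  · rw [← h l.1 l.2]; exact h2 l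
  · rw [h l.1 l.2]; exact h2 l

lemma div_split (a n r i : ℕ) (ha : 0 < a) :
    (a * n + r) * (i + 1) / a = n * (i + 1) + r * (i + 1) / a := by
  rw [add_mul, mul_assoc, add_comm, Nat.add_mul_div_left _ _ ha, add_comm]

/-- The "standard" bound `i ↦ n*(i+1)`. -/
def gfun (n : ℕ) : ℕ → ℕ := fun i => n * (i + 1)

/-- The bound for `(2k, 2kn+2)`-paths. -/
def ffun (n k : ℕ) : ℕ → ℕ := fun i => n * (i + 1) + (i + 1) / k

/-- The "standard" count: monotone sequences of length `t` with `c i ≤ n*(i+1)`. -/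
noncomputable def std (n t : ℕ) : ℕ := (Mset t (gfun n)).ncard

lemma dyck_std (p n : ℕ) (hp : 1 ≤ p) : dyckCount p (p * n + 1) = std n (p - 1) := by
  rw [dyck_eq, std]
  congr 1
  apply Mset_congr
  intro i hi
  simp only [gfun]
  rw [div_split p n 1 i hp, one_mul, Nat.div_eq_of_lt (by omega)]
  omega

/-- Gluing a head of length `L`, the pinned value `v`, and a tail of length `t`. -/
def glue (L t v : ℕ) (h : Fin L → ℕ) (d : Fin t → ℕ) : Fin (L + 1 + t) → ℕ :=
  fun i =>
    if hi : i.1 < L then h ⟨i.1, hi⟩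
    else if hi' : L < i.1 then v + d ⟨i.1 - (L + 1), by have := i.isLt; omega⟩
    else v

variable {L t v : ℕ} {h : Fin L → ℕ} {d : Fin t → ℕ}

lemma glue_lt {x : ℕ} (hx : x < L) (hx' : x < L + 1 + t) :
    glue L t v h d ⟨x, hx'⟩ = h ⟨x, hx⟩ := by
  simp [glue, hx]

lemma glue_at (hx' : L < L + 1 + t) : glue L t v h d ⟨L, hx'⟩ = v := by
  simp [glue]

lemma glue_gt {x : ℕ} (hx : L < x) (hx' : x < L + 1 + t) :
    glue L t v h d ⟨x, hx'⟩ = v + d ⟨x - (L + 1), by omega⟩ := by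
  simp only [glue]
  rw [dif_neg (by omega), dif_pos hx]

lemma glue_le_v {x : ℕ} (hx : x ≤ L) (hx' : x < L + 1 + t)
    (hhv : ∀ i : Fin L, h i ≤ v) : glue L t v h d ⟨x, hx'⟩ ≤ v := by
  rcases lt_or_eq_of_le hx with hlt | rfl
  · rw [glue_lt hlt]; exact hhv _
  · rw [glue_at]

lemma v_le_glue {x : ℕ} (hx : L ≤ x) (hx' : x < L + 1 + t) :
    v ≤ glue L t v h d ⟨x, hx'⟩ := by
  rcases lt_or_eq_of_le hx with hlt | rfl
  · rw [glue_gt hlt]; exact Nat.le_add_right _ _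
  · rw [glue_at]

lemma glue_mono (hm1 : Monotone h) (hm2 : Monotone d)
    (hhv : ∀ i : Fin L, h i ≤ v) : Monotone (glue L t v h d) := by
  intro a b hab
  obtain ⟨x, hx⟩ := a; obtain ⟨y, hy⟩ := b
  rw [Fin.mk_le_mk] at hab
  rcases lt_trichotomy x L with hxL | hxL | hxL
  · rcases lt_or_ge y L with hyL | hyL
    · rw [glue_lt hxL, glue_lt hyL]
      exact hm1 (show (⟨x, hxL⟩ : Fin L) ≤ ⟨y, hyL⟩ from hab)
    · exact le_trans (glue_le_v (le_of_lt hxL) hx hhv) (v_le_glue hyL hy)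
  · subst hxL
    exact le_trans (glue_le_v le_rfl hx hhv) (v_le_glue (by omega) hy)
  · have hyL : L < y := lt_of_lt_of_le hxL hab
    rw [glue_gt hxL, glue_gt hyL]
    exact Nat.add_le_add_left
      (hm2 (show (⟨x - (L+1), _⟩ : Fin t) ≤ ⟨y - (L+1), _⟩ from by
        rw [Fin.mk_le_mk]; omega)) v

/-- The key splitting lemma: sequences that are pinned to value `v` at position `L`
and stay `≤ g₁` strictly before `L` are counted by a product. -/
lemma split_card (L t : ℕ) (f g₁ g₂ : ℕ → ℕ) (v : ℕ)
    (h1 : ∀ i < L, g₁ i ≤ v)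
    (h2 : ∀ i < t, f (L + 1 + i) = v + g₂ i)
    (h3 : ∀ i < L, g₁ i ≤ f i)
    (h4 : v ≤ f L) :
    ({c | c ∈ Mset (L + 1 + t) f ∧
        (∀ i : Fin (L + 1 + t), i.1 = L → c i = v) ∧
        (∀ i : Fin (L + 1 + t), i.1 < L → c i ≤ g₁ i.1)} :
      Set (Fin (L + 1 + t) → ℕ)).ncard
      = (Mset L g₁).ncard * (Mset t g₂).ncard := by
  classical
  set E : Set (Fin (L + 1 + t) → ℕ) :=
    {c | c ∈ Mset (L + 1 + t) f ∧
        (∀ i : Fin (L + 1 + t), i.1 = L → c i = v) ∧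
        (∀ i : Fin (L + 1 + t), i.1 < L → c i ≤ g₁ i.1)} with hE
  have hLlt : L < L + 1 + t := by omega
  have key : ∀ p : ↥(Mset L g₁) × ↥(Mset t g₂), glue L t v p.1.1 p.2.1 ∈ E := by
    rintro ⟨⟨h, ⟨hm1, hb1⟩⟩, ⟨d, ⟨hm2, hb2⟩⟩⟩
    have hhv : ∀ i : Fin L, h i ≤ v := fun i => le_trans (hb1 i) (h1 i.1 i.2)
    refine ⟨⟨glue_mono hm1 hm2 hhv, ?_⟩, ?_, ?_⟩
    · rintro ⟨x, hx⟩
      rcases lt_trichotomy x L with hxL | hxL | hxL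
      · rw [glue_lt hxL]
        exact le_trans (le_trans (hb1 _) (h3 x hxL)) le_rfl
      · subst hxL; rw [glue_at]; exact h4
      · rw [glue_gt hxL]
        have hx2 : x - (L + 1) < t := by omega
        have hfx : f x = v + g₂ (x - (L + 1)) := by
          have h := h2 (x - (L + 1)) hx2
          rwa [show L + 1 + (x - (L + 1)) = x by omega] at h
        exact le_trans (Nat.add_le_add_left (hb2 _) v) (le_of_eq hfx.symm)
    · rintro ⟨x, hx⟩ hxL
      simp only at hxL
      subst hxL
      exact glue_at hx
    · rintro ⟨x, hx⟩ hxL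
      simp only at hxL
      rw [glue_lt hxL]
      exact hb1 _
  have hinj : Function.Injective
      (fun p : ↥(Mset L g₁) × ↥(Mset t g₂) =>
        (⟨glue L t v p.1.1 p.2.1, key p⟩ : E)) := by
    rintro ⟨⟨h, hh⟩, ⟨d, hd⟩⟩ ⟨⟨h', hh'⟩, ⟨d', hd'⟩⟩ heq
    simp only [Subtype.mk_eq_mk] at heq
    have heq' : ∀ x (hx : x < L + 1 + t),
        glue L t v h d ⟨x, hx⟩ = glue L t v h' d' ⟨x, hx⟩ := by
      intro x hx; rw [heq]
    refine Prod.ext (Subtype.ext (funext fun i => ?_)) (Subtype.ext (funext fun i => ?_))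
    · obtain ⟨x, hx⟩ := i
      have := heq' x (by omega)
      rwa [glue_lt hx, glue_lt hx] at this
    · obtain ⟨x, hx⟩ := i
      have hidx : (⟨L + 1 + x - (L + 1), by omega⟩ : Fin t) = ⟨x, hx⟩ := by
        apply Fin.ext
        simp only
        omega
      have e1 : v + d ⟨x, hx⟩ = v + d' ⟨x, hx⟩ := by
        have g1 := glue_gt (v := v) (h := h) (d := d)
          (x := L + 1 + x) (by omega) (by omega)
        have g2 := glue_gt (v := v) (h := h') (d := d')
          (x := L + 1 + x) (by omega) (by omega)
        rw [hidx] at g1 g2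
        rw [← g1, ← g2]
        exact heq' _ _
      exact Nat.add_left_cancel e1
  have hsurj : Function.Surjective
      (fun p : ↥(Mset L g₁) × ↥(Mset t g₂) =>
        (⟨glue L t v p.1.1 p.2.1, key p⟩ : E)) := by
    rintro ⟨c, ⟨⟨hcm, hcb⟩, hcpin, hchead⟩⟩
    have hcL : c ⟨L, hLlt⟩ = v := hcpin ⟨L, hLlt⟩ rfl
    have hcv : ∀ x (hx : x < L + 1 + t), L ≤ x → v ≤ c ⟨x, hx⟩ := by
      intro x hx hLx
      rw [← hcL]
      exact hcm (show (⟨L, hLlt⟩ : Fin (L+1+t)) ≤ ⟨x, hx⟩ from by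
        rw [Fin.mk_le_mk]; exact hLx)
    refine ⟨⟨⟨fun i => c ⟨i.1, by omega⟩, ?_, ?_⟩,
            ⟨fun i => c ⟨L + 1 + i.1, by omega⟩ - v, ?_, ?_⟩⟩, ?_⟩
    · intro a b hab
      exact hcm (show (⟨a.1, _⟩ : Fin (L+1+t)) ≤ ⟨b.1, _⟩ from by
        rw [Fin.mk_le_mk]; exact hab)
    · intro l
      exact hchead ⟨l.1, by omega⟩ l.2
    · intro a b hab
      apply Nat.sub_le_sub_right
      exact hcm (show (⟨L + 1 + a.1, _⟩ : Fin (L+1+t)) ≤ ⟨L + 1 + b.1, _⟩ from by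
        rw [Fin.mk_le_mk]; omega)
    · intro l
      have hb := hcb ⟨L + 1 + l.1, by omega⟩
      simp only at hb
      rw [h2 l.1 l.2] at hb
      rw [tsub_le_iff_left]
      exact hb
    · apply Subtype.ext
      funext i
      obtain ⟨x, hx⟩ := i
      simp only
      rcases lt_trichotomy x L with hxL | hxL | hxL
      · rw [glue_lt hxL]
      · subst hxL
        rw [glue_at, hcL]
      · rw [glue_gt hxL]
        have hLx : L ≤ L + 1 + (x - (L + 1)) := by omega
        have hx' : L + 1 + (x - (L + 1)) = x := by omega
        have := hcv x hx (by omega)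
        simp only [hx']
        omega
  rw [← Nat.card_coe_set_eq, ← Nat.card_coe_set_eq, ← Nat.card_coe_set_eq,
    ← Nat.card_prod]
  exact (Nat.card_congr (Equiv.ofBijective _ ⟨hinj, hsurj⟩)).symm

lemma ncard_biUnion {ι α : Type*} [DecidableEq ι] (s : Finset ι) (t : ι → Set α)
    (hfin : ∀ i ∈ s, (t i).Finite)
    (hdisj : ∀ i ∈ s, ∀ j ∈ s, i ≠ j → Disjoint (t i) (t j)) :
    (⋃ i ∈ s, t i).ncard = ∑ i ∈ s, (t i).ncard := by
  induction s using Finset.induction_on with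
  | empty => simp
  | @insert a s ha ih =>
    have hfinA : (t a).Finite := hfin a (Finset.mem_insert_self a s)
    have hfinU : (⋃ i ∈ s, t i).Finite :=
      Set.Finite.biUnion s.finite_toSet
        (fun i hi => hfin i (Finset.mem_insert_of_mem hi))
    have hdis : Disjoint (t a) (⋃ i ∈ s, t i) := by
      rw [Set.disjoint_left]
      intro x hx hx'
      rw [Set.mem_iUnion₂] at hx'
      obtain ⟨i, hi, hxi⟩ := hx'
      exact Set.disjoint_left.mp
        (hdisj a (Finset.mem_insert_self a s) i (Finset.mem_insert_of_mem hi)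
          (by rintro rfl; exact ha hi)) hx hxi
    rw [Finset.set_biUnion_insert, Finset.sum_insert ha,
      Set.ncard_union_eq hdis hfinA hfinU,
      ih (fun i hi => hfin i (Finset.mem_insert_of_mem hi))
        (fun i hi j hj hij =>
          hdisj i (Finset.mem_insert_of_mem hi) j (Finset.mem_insert_of_mem hj) hij)]

/-- The set of paths whose first violation is at position `2k-j`. -/
def Efun (n k j : ℕ) : Set (Fin (2 * k - 1) → ℕ) :=
  {c | c ∈ Mset (2 * k - 1) (ffun n k) ∧
    (∀ i : Fin (2 * k - 1), i.1 = 2 * k - 1 - j → c i = n * (2 * k - j) + 1) ∧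
    (∀ i : Fin (2 * k - 1), i.1 < 2 * k - 1 - j → c i ≤ gfun n i.1)}

lemma Ecard (n k j : ℕ) (hk : 1 ≤ k) (hj1 : 1 ≤ j) (hjk : j ≤ k) :
    (Efun n k j).ncard = std n (2 * k - 1 - j) * std n (j - 1) := by
  obtain ⟨L, hL⟩ : ∃ L, L = 2 * k - 1 - j := ⟨_, rfl⟩
  obtain ⟨t, ht⟩ : ∃ t, t = j - 1 := ⟨_, rfl⟩
  have hmL : 2 * k - 1 = L + 1 + t := by omega
  have hLk : k ≤ L + 1 := by omega
  have hveq : n * (2 * k - j) + 1 = n * (L + 1) + 1 := by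
    rw [show 2 * k - j = L + 1 by omega]
  have harg1 : ∀ i < L, gfun n i ≤ n * (L + 1) + 1 := fun i hi => by
    simp only [gfun]
    have : n * (i + 1) ≤ n * (L + 1) := Nat.mul_le_mul_left n (by omega)
    omega
  have harg2 : ∀ i < t, ffun n k (L + 1 + i) = n * (L + 1) + 1 + gfun n i :=
    fun i hi => by
      simp only [ffun, gfun]
      have hdiv : (L + 1 + i + 1) / k = 1 := by
        apply Nat.div_eq_of_lt_le
        · omega
        · omega
      rw [hdiv]
      have : n * (L + 1 + i + 1) = n * (L + 1) + n * (i + 1) := by ring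
      omega
  have harg3 : ∀ i < L, gfun n i ≤ ffun n k i :=
    fun i hi => by simp only [ffun, gfun]; exact Nat.le_add_right _ _
  have harg4 : n * (L + 1) + 1 ≤ ffun n k L := by
    simp only [ffun]
    have hdiv : 1 ≤ (L + 1) / k := (Nat.one_le_div_iff (by omega)).mpr hLk
    omega
  rw [← hL, ← ht]
  have hsets : Efun n k j = (fun c : Fin (L + 1 + t) → ℕ => c ∘ Fin.cast hmL) ''
      {c : Fin (L + 1 + t) → ℕ | c ∈ Mset (L + 1 + t) (ffun n k) ∧
        (∀ i : Fin (L + 1 + t), i.1 = L → c i = n * (L + 1) + 1) ∧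
        (∀ i : Fin (L + 1 + t), i.1 < L → c i ≤ gfun n i.1)} := by
    ext c
    simp only [Efun, Set.mem_setOf_eq, Set.mem_image]
    constructor
    · rintro ⟨⟨hc1, hc2⟩, hc3, hc4⟩
      refine ⟨c ∘ Fin.cast hmL.symm, ⟨⟨?_, ?_⟩, ?_, ?_⟩, ?_⟩
      · intro a b hab
        exact hc1 (show Fin.cast hmL.symm a ≤ Fin.cast hmL.symm b from hab)
      · intro l; exact hc2 (Fin.cast hmL.symm l)
      · intro i hi
        rw [← hveq]
        exact hc3 (Fin.cast hmL.symm i) (by simp only [Fin.coe_cast]; omega)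
      · intro i hi
        exact hc4 (Fin.cast hmL.symm i) (by simp only [Fin.coe_cast]; omega)
      · funext i; rfl
    · rintro ⟨c', ⟨⟨hc1, hc2⟩, hc3, hc4⟩, rfl⟩
      refine ⟨⟨?_, ?_⟩, ?_, ?_⟩
      · intro a b hab
        exact hc1 (show Fin.cast hmL a ≤ Fin.cast hmL b from hab)
      · intro l; exact hc2 (Fin.cast hmL l)
      · intro i hi
        rw [hveq]
        exact hc3 (Fin.cast hmL i) (by simp only [Fin.coe_cast]; omega)
      · intro i hi
        exact hc4 (Fin.cast hmL i) (by simp only [Fin.coe_cast]; omega)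
  have himg := Set.ncard_image_of_injective (f := fun c : Fin (L + 1 + t) → ℕ =>
      c ∘ Fin.cast hmL)
    ({c : Fin (L + 1 + t) → ℕ | c ∈ Mset (L + 1 + t) (ffun n k) ∧
        (∀ i : Fin (L + 1 + t), i.1 = L → c i = n * (L + 1) + 1) ∧
        (∀ i : Fin (L + 1 + t), i.1 < L → c i ≤ gfun n i.1)})
    (fun c c' hcc => funext fun i => congrFun hcc (Fin.cast hmL.symm i))
  rw [hsets, himg, std, std]
  exact split_card L t (ffun n k) (gfun n) (gfun n) (n * (L + 1) + 1)
    harg1 harg2 harg3 harg4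

end DyckAux

open DyckAux in
theorem dyck_count_diff_add (k n : ℕ) (hk : 1 ≤ k) (hn : 1 ≤ n) :
    (dyckCount (2 * k) (2 * k * n + 2) : ℤ) -
      (dyckCount (2 * k) (2 * k * n + 1) : ℤ) =
      ∑ j ∈ Finset.Icc 1 k,
        (dyckCount (2 * k - j) ((2 * k - j) * n + 1) : ℤ) *
          (dyckCount j (j * n + 1) : ℤ) := by
  classical
  have hA : dyckCount (2 * k) (2 * k * n + 2) = (Mset (2 * k - 1) (ffun n k)).ncard := by
    rw [dyck_eq]
    congr 1
    apply Mset_congr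
    intro i hi
    simp only [ffun]
    rw [div_split (2 * k) n 2 i (by omega)]
    congr 1
    have h2 : 2 * (i + 1) / (2 * k) = (i + 1) / k := Nat.mul_div_mul_left _ _ (by omega)
    simpa using h2
  have hB : dyckCount (2 * k) (2 * k * n + 1) = (Mset (2 * k - 1) (gfun n)).ncard := by
    rw [dyck_eq]
    congr 1
    apply Mset_congr
    intro i hi
    simp only [gfun]
    rw [div_split (2 * k) n 1 i (by omega), one_mul, Nat.div_eq_of_lt (by omega)]
    omega
  have hEfin : ∀ j, (Efun n k j).Finite :=
    fun j => (Mset_finite (2 * k - 1) (ffun n k)).subset (fun c hc => hc.1)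
  -- pairwise disjointness
  have hEdisj : ∀ i ∈ Finset.Icc 1 k, ∀ j ∈ Finset.Icc 1 k, i ≠ j →
      Disjoint (Efun n k i) (Efun n k j) := by
    have main : ∀ i j : ℕ, 1 ≤ i → i ≤ k → 1 ≤ j → j ≤ k → i < j →
        Disjoint (Efun n k i) (Efun n k j) := by
      intro i j hi1 hik hj1 hjk hij
      rw [Set.disjoint_left]
      rintro c ⟨_, hc3, hc4⟩ ⟨_, hd3, hd4⟩
      have hlt : 2 * k - 1 - j < 2 * k - 1 := by omega
      have h1 := hd3 ⟨2 * k - 1 - j, hlt⟩ rfl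
      have h2 := hc4 ⟨2 * k - 1 - j, hlt⟩ (by simp only; omega)
      simp only [gfun] at h2
      have h3 : n * (2 * k - j) = n * (2 * k - 1 - j + 1) := by
        rw [show 2 * k - j = 2 * k - 1 - j + 1 by omega]
      omega
    intro i hi j hj hij
    rw [Finset.mem_Icc] at hi hj
    rcases lt_or_gt_of_ne hij with h | h
    · exact main i j hi.1 hi.2 hj.1 hj.2 h
    · exact (main j i hj.1 hj.2 hi.1 hi.2 h).symm
  -- the difference set is the union of the Efun n k j
  have hcover : Mset (2 * k - 1) (ffun n k) \ Mset (2 * k - 1) (gfun n)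
      = ⋃ j ∈ Finset.Icc 1 k, Efun n k j := by
    ext c
    simp only [Set.mem_diff, Set.mem_iUnion, Finset.mem_Icc]
    constructor
    · rintro ⟨⟨hc1, hc2⟩, hc3⟩
      have hex : ∃ i, ∃ h : i < 2 * k - 1, n * (i + 1) < c ⟨i, h⟩ := by
        by_contra hcon
        push_neg at hcon
        refine hc3 ⟨hc1, fun l => ?_⟩
        have hl := hcon l.1 l.2
        simpa [gfun] using hl
      obtain ⟨hl₀, hval⟩ := Nat.find_spec hex
      have hmin : ∀ i, i < Nat.find hex → ∀ h : i < 2 * k - 1,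
          c ⟨i, h⟩ ≤ n * (i + 1) := by
        intro i hi h
        have hnm := Nat.find_min hex hi
        push_neg at hnm
        simpa using hnm h
      have hub := hc2 ⟨Nat.find hex, hl₀⟩
      simp only [ffun] at hub
      have hdivle : (Nat.find hex + 1) / k ≤ 1 :=
        Nat.le_of_lt_succ ((Nat.div_lt_iff_lt_mul (by omega)).mpr (by omega))
      have hble : c ⟨Nat.find hex, hl₀⟩ ≤ n * (Nat.find hex + 1) + 1 :=
        le_trans hub (Nat.add_le_add_left hdivle _)
      have hkle : k ≤ Nat.find hex + 1 := by
        by_contra hcon2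
        rw [Nat.div_eq_of_lt (by omega)] at hub
        omega
      have hcl : c ⟨Nat.find hex, hl₀⟩ = n * (Nat.find hex + 1) + 1 := by omega
      refine ⟨2 * k - 1 - Nat.find hex, ⟨by omega, by omega⟩, ⟨hc1, hc2⟩, ?_, ?_⟩
      · intro i hi
        have hieq : i = ⟨Nat.find hex, hl₀⟩ := by
          apply Fin.ext
          simp only at hi ⊢
          omega
        rw [hieq, hcl, show 2 * k - (2 * k - 1 - Nat.find hex) = Nat.find hex + 1
          by omega]
      · intro i hi
        have hile : i.1 < Nat.find hex := by omega
        have hmm := hmin i.1 hile i.2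
        simp only [Fin.eta] at hmm
        simpa [gfun] using hmm
    · rintro ⟨j, ⟨hj1, hjk⟩, ⟨hc1, hc2⟩, hc3, hc4⟩
      refine ⟨⟨hc1, hc2⟩, ?_⟩
      rintro ⟨_, hcg⟩
      have hlt : 2 * k - 1 - j < 2 * k - 1 := by omega
      have h1 := hc3 ⟨2 * k - 1 - j, hlt⟩ rfl
      have h2 := hcg ⟨2 * k - 1 - j, hlt⟩
      simp only [gfun] at h2
      have h3 : n * (2 * k - j) = n * (2 * k - 1 - j + 1) := by
        rw [show 2 * k - j = 2 * k - 1 - j + 1 by omega]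
      omega
  have hsubBA : Mset (2 * k - 1) (gfun n) ⊆ Mset (2 * k - 1) (ffun n k) := by
    rintro c ⟨hc1, hc2⟩
    exact ⟨hc1, fun l => le_trans (hc2 l)
      (by simp only [ffun, gfun]; exact Nat.le_add_right _ _)⟩
  have hnat : (Mset (2 * k - 1) (ffun n k)).ncard =
      (Mset (2 * k - 1) (gfun n)).ncard
        + ∑ j ∈ Finset.Icc 1 k, (Efun n k j).ncard := by
    have h1 := Set.ncard_diff_add_ncard_of_subset hsubBA
      (Mset_finite (2 * k - 1) (ffun n k))
    rw [hcover, ncard_biUnion _ _ (fun j _ => hEfin j) hEdisj] at h1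
    omega
  have hRHS : ∀ j ∈ Finset.Icc 1 k,
      dyckCount (2 * k - j) ((2 * k - j) * n + 1) * dyckCount j (j * n + 1)
        = (Efun n k j).ncard := by
    intro j hj
    rw [Finset.mem_Icc] at hj
    rw [dyck_std _ _ (by omega), dyck_std _ _ (by omega),
      Ecard n k j hk hj.1 hj.2, show 2 * k - j - 1 = 2 * k - 1 - j by omega]
  have hfinal : dyckCount (2 * k) (2 * k * n + 2) =
      dyckCount (2 * k) (2 * k * n + 1) +
        ∑ j ∈ Finset.Icc 1 k,
          dyckCount (2 * k - j) ((2 * k - j) * n + 1) * dyckCount j (j * n + 1) := by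
    rw [hA, hB, hnat, Finset.sum_congr rfl hRHS]
  rw [hfinal]
  push_cast
  ring
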